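/- The optimal threshold q̄*(Δ_II) = (1 + g(Δ_II)) / (2 + g(Δ_II)) with g(Δ) = c_I·Δ²/(c_II·(c_I+c_II+Δ)²) is monotonically increasing in Δ_II on [0, ∞), equals 1/2 at Δ_II = 0, and converges to (1 + c_I/c_II)/(2 + c_I/c_II) = (c_I+c_II)/(c_I+2c_II) as Δ_II → ∞. -/

import Mathlib

/-- q̄*(Δ) = (1+g(Δ))/(2+g(Δ)), g(Δ) = cI·Δ²/(cII·(cI+cII+Δ)²),
is monotonically increasing on [0,∞), equals 1/2 at Δ = 0, and converges to
(1 + cI/cII)/(2 + cI/cII) = (cI+cII)/(cI+2cII) as Δ → ∞. -/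
theorem optimal_threshold_comparative_statics
    (cI cII : ℝ) (hcI : 0 < cI) (hcII : 0 < cII) :
    let g : ℝ → ℝ := fun Δ => cI * Δ ^ 2 / (cII * (cI + cII + Δ) ^ 2)
    let qstar : ℝ → ℝ := fun Δ => (1 + g Δ) / (2 + g Δ)
    MonotoneOn qstar (Set.Ici 0) ∧
    qstar 0 = 1/2 ∧
    (1 + cI / cII) / (2 + cI / cII) = (cI + cII) / (cI + 2 * cII) ∧
    Filter.Tendsto qstar Filter.atTop (nhds ((cI + cII) / (cI + 2 * cII))) := by
  intro g qstar
  have hs : 0 < cI + cII := by linarith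
  have hgnonneg : ∀ x : ℝ, 0 ≤ x → 0 ≤ g x := by
    intro x hx
    apply div_nonneg
    · positivity
    · positivity
  refine ⟨?_, ?_, ?_, ?_⟩
  · -- monotone
    intro a ha b hb hab
    simp only [Set.mem_Ici] at ha hb
    have hga : 0 ≤ g a := hgnonneg a ha
    have hgb : 0 ≤ g b := hgnonneg b hb
    have hgab : g a ≤ g b := by
      have hda : 0 < cII * (cI + cII + a) ^ 2 := by positivity
      have hdb : 0 < cII * (cI + cII + b) ^ 2 := by positivity
      rw [show g a = cI * a ^ 2 / (cII * (cI + cII + a) ^ 2) from rfl,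
        show g b = cI * b ^ 2 / (cII * (cI + cII + b) ^ 2) from rfl,
        div_le_div_iff₀ hda hdb]
      nlinarith [mul_nonneg (mul_nonneg hs.le (sub_nonneg.2 hab))
        (show (0:ℝ) ≤ b*(cI+cII+a)+a*(cI+cII+b) by positivity), mul_pos hcI hcII,
        mul_nonneg (mul_pos hcI hcII).le (mul_nonneg (mul_nonneg hs.le (sub_nonneg.2 hab)) (show (0:ℝ) ≤ b*(cI+cII+a)+a*(cI+cII+b) by positivity))]
    show (1 + g a) / (2 + g a) ≤ (1 + g b) / (2 + g b)
    rw [div_le_div_iff₀ (by linarith) (by linarith)]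
    nlinarith
  · show (1 + g 0) / (2 + g 0) = 1/2
    have : g 0 = 0 := by
      simp [g]
    rw [this]; norm_num
  · field_simp
    ring
  · -- limit
    have hlim : Filter.Tendsto g Filter.atTop (nhds (cI / cII)) := by
      have h1 : Filter.Tendsto (fun x : ℝ => cI + cII + x) Filter.atTop Filter.atTop :=
        Filter.tendsto_atTop_add_const_left _ _ Filter.tendsto_id
      have h2 : Filter.Tendsto (fun x : ℝ => (cI + cII) / (cI + cII + x)) Filter.atTop (nhds 0) :=
        Filter.Tendsto.div_atTop tendsto_const_nhds h1
      have h3 : Filter.Tendsto (fun x : ℝ => x / (cI + cII + x)) Filter.atTop (nhds 1) := by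
        have : Filter.Tendsto (fun x : ℝ => 1 - (cI + cII) / (cI + cII + x)) Filter.atTop
            (nhds (1 - 0)) := tendsto_const_nhds.sub h2
        rw [sub_zero] at this
        refine this.congr' ?_
        filter_upwards [Filter.eventually_gt_atTop 0] with x hx
        have hne : cI + cII + x ≠ 0 := by positivity
        field_simp
        ring
      have h4 : Filter.Tendsto (fun x : ℝ => cI / cII * (x / (cI + cII + x)) ^ 2)
          Filter.atTop (nhds (cI / cII * 1 ^ 2)) := by
        exact tendsto_const_nhds.mul ((h3.pow 2))
      rw [one_pow, mul_one] at h4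
      refine h4.congr' ?_
      filter_upwards [Filter.eventually_gt_atTop 0] with x hx
      have hne : cI + cII + x ≠ 0 := by positivity
      show cI / cII * (x / (cI + cII + x)) ^ 2 = cI * x ^ 2 / (cII * (cI + cII + x) ^ 2)
      field_simp
    have hden : (2 : ℝ) + cI / cII ≠ 0 := by positivity
    have hq : Filter.Tendsto qstar Filter.atTop (nhds ((1 + cI / cII) / (2 + cI / cII))) :=
      (tendsto_const_nhds.add hlim).div (tendsto_const_nhds.add hlim) hden
    have heq : (1 + cI / cII) / (2 + cI / cII) = (cI + cII) / (cI + 2 * cII) := by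
      field_simp; ring
    rwa [heq] at hq
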